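/- Let (p_n)_{n≥1} be the strictly increasing enumeration of all odd primes, and let M be the submonoid of (ℚ, +) generated by the set {1/(2^{n-1} p_n) : n ∈ ℕ, n ≥ 1}. Then M is atomic, the set of atoms of M is exactly {1/(2^{n-1} p_n) : n ≥ 1}, and M does not satisfy the ACCP (for instance, (1/2^n + M)_{n≥1} is an ascending chain of principal ideals of M that does not stabilize). -/

import Mathlib

/-- A subset `S` of an abelian group is a submonoid if it contains `0`
and is closed under addition. -/
def IsSubmonoidSet {G : Type*} [AddCommGroup G] (S : Set G) : Prop :=
  (0 : G) ∈ S ∧ ∀ a ∈ S, ∀ b ∈ S, a + b ∈ S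

/-- `a` is an atom of the (sub)monoid `S`: it belongs to `S`, is not invertible in `S`,
and whenever `a = b + c` with `b, c ∈ S`, one of `b`, `c` is invertible in `S`. -/
def IsAtomIn {G : Type*} [AddCommGroup G] (S : Set G) (a : G) : Prop :=
  a ∈ S ∧ -a ∉ S ∧ ∀ b ∈ S, ∀ c ∈ S, a = b + c → (-b ∈ S ∨ -c ∈ S)

/-- `S` is atomic: every non-invertible element of `S` is a finite sum of atoms of `S`. -/
def IsAtomicSet {G : Type*} [AddCommGroup G] (S : Set G) : Prop :=
  ∀ a ∈ S, -a ∉ S → ∃ l : Multiset G, (∀ x ∈ l, IsAtomIn S x) ∧ l.sum = a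

/-- The principal ideal `b + S` of the (sub)monoid `S`. -/
def setIdeal {G : Type*} [AddCommGroup G] (S : Set G) (b : G) : Set G :=
  {x | ∃ m ∈ S, x = b + m}

/-- `S` satisfies the ACCP: every ascending chain of principal ideals of `S` stabilizes. -/
def SatisfiesACCPSet {G : Type*} [AddCommGroup G] (S : Set G) : Prop :=
  ∀ b : ℕ → G, (∀ n, b n ∈ S) →
    (∀ n, setIdeal S (b n) ⊆ setIdeal S (b (n + 1))) →
    ∃ N, ∀ n, N ≤ n → setIdeal S (b n) = setIdeal S (b N)

/-- The strictly increasing enumeration of the odd primes: for `n ≥ 1`,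
`oddPrime n = Nat.nth Nat.Prime n` is the `n`-th odd prime (since `Nat.nth Nat.Prime 0 = 2`). -/
noncomputable def oddPrime (n : ℕ) : ℕ := Nat.nth Nat.Prime n

/-- The generating set `{1/(2^(n-1) p_n) : n ≥ 1}` of Grams' monoid. -/
noncomputable def gramsGen : Set ℚ :=
  {q | ∃ n : ℕ, 1 ≤ n ∧ q = 1 / (2 ^ (n - 1) * (oddPrime n : ℚ))}

/-- Grams' monoid: the submonoid of `(ℚ, +)` generated by `{1/(2^(n-1) p_n) : n ≥ 1}`. -/
noncomputable def gramsM : Set ℚ := ↑(AddSubmonoid.closure gramsGen)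

private lemma oddPrime_prime (n : ℕ) : (oddPrime n).Prime := Nat.prime_nth_prime n

private lemma oddPrime_inj {m n : ℕ} (h : oddPrime m = oddPrime n) : m = n :=
  Nat.nth_injective Nat.infinite_setOf_prime h

private lemma oddPrime_ne_two {n : ℕ} (hn : 1 ≤ n) : oddPrime n ≠ 2 := by
  intro h
  have h0 : oddPrime 0 = 2 := Nat.nth_prime_zero_eq_two
  have := oddPrime_inj (h.trans h0.symm)
  omega

private lemma oddPrime_pos (n : ℕ) : 0 < oddPrime n := (oddPrime_prime n).pos

private lemma gen_eq_inv (n : ℕ) :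
    (1 : ℚ) / (2 ^ (n - 1) * (oddPrime n : ℚ)) = (((2 ^ (n - 1) * oddPrime n : ℕ) : ℚ))⁻¹ := by
  push_cast
  rw [one_div]

private lemma gen_den (n : ℕ) :
    ((1 : ℚ) / (2 ^ (n - 1) * (oddPrime n : ℚ))).den = 2 ^ (n - 1) * oddPrime n := by
  rw [gen_eq_inv, Rat.inv_natCast_den_of_pos]
  exact Nat.mul_pos (pow_pos (by norm_num) _) (oddPrime_pos n)

private lemma gen_pos {x : ℚ} (hx : x ∈ gramsGen) : 0 < x := by
  obtain ⟨n, -, rfl⟩ := hx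
  have hp : (0 : ℚ) < (oddPrime n : ℚ) := by exact_mod_cast oddPrime_pos n
  positivity

private lemma mem_gramsM_iff {q : ℚ} :
    q ∈ gramsM ↔ ∃ l : Multiset ℚ, (∀ x ∈ l, x ∈ gramsGen) ∧ l.sum = q := by
  constructor
  · exact fun h => AddSubmonoid.exists_multiset_of_mem_closure h
  · rintro ⟨l, hl, rfl⟩
    exact AddSubmonoid.multiset_sum_mem _ _ fun x hx => AddSubmonoid.subset_closure (hl x hx)

private lemma gramsM_nonneg {q : ℚ} (hq : q ∈ gramsM) : 0 ≤ q := by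
  obtain ⟨l, hl, rfl⟩ := mem_gramsM_iff.mp hq
  exact Multiset.sum_nonneg fun x hx => (gen_pos (hl x hx)).le

private lemma gramsM_eq_zero {q : ℚ} (hq : q ∈ gramsM) (hq' : -q ∈ gramsM) : q = 0 := by
  have h1 := gramsM_nonneg hq
  have h2 := gramsM_nonneg hq'
  linarith

private lemma sum_eq_zero {l : Multiset ℚ} (hl : ∀ x ∈ l, x ∈ gramsGen) (h : l.sum = 0) :
    l = 0 := by
  by_contra hne
  obtain ⟨x, hx⟩ := Multiset.exists_mem_of_ne_zero hne
  have hx' : 0 < x := gen_pos (hl x hx)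
  have : l = x ::ₘ l.erase x := (Multiset.cons_erase hx).symm
  rw [this, Multiset.sum_cons] at h
  have : 0 ≤ (l.erase x).sum :=
    Multiset.sum_nonneg fun y hy => (gen_pos (hl y (Multiset.mem_of_mem_erase hy))).le
  linarith

private lemma not_dvd_sum_den {p : ℕ} (hp : p.Prime) (l : Multiset ℚ)
    (hl : ∀ x ∈ l, ¬ (p ∣ x.den)) : ¬ p ∣ l.sum.den := by
  induction l using Multiset.induction_on with
  | empty =>
    intro h
    rw [Multiset.sum_zero] at h
    have h0 : (0 : ℚ).den = 1 := rfl
    rw [h0, Nat.dvd_one] at h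
    exact hp.ne_one h
  | cons a s ih =>
    intro hdvd
    rw [Multiset.sum_cons] at hdvd
    have hd := Rat.add_den_dvd a s.sum
    have : p ∣ a.den * s.sum.den := hdvd.trans hd
    rcases (Nat.Prime.dvd_mul hp).mp this with h | h
    · exact hl a (Multiset.mem_cons_self a s) h
    · exact ih (fun x hx => hl x (Multiset.mem_cons_of_mem hx)) h

private lemma rep_unique {n : ℕ} (hn : 1 ≤ n) {l : Multiset ℚ}
    (hl : ∀ x ∈ l, x ∈ gramsGen)
    (hsum : l.sum = 1 / (2 ^ (n - 1) * (oddPrime n : ℚ))) :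
    l = {1 / (2 ^ (n - 1) * (oddPrime n : ℚ))} := by
  set g : ℚ := 1 / (2 ^ (n - 1) * (oddPrime n : ℚ)) with hg
  by_cases hmem : g ∈ l
  · have hl' : l = g ::ₘ l.erase g := (Multiset.cons_erase hmem).symm
    rw [hl', Multiset.sum_cons] at hsum
    have h0 : (l.erase g).sum = 0 := by linarith
    have := sum_eq_zero (fun x hx => hl x (Multiset.mem_of_mem_erase hx)) h0
    rw [hl', this]
    rfl
  · exfalso
    have hp := oddPrime_prime n
    have hnd : ∀ x ∈ l, ¬ (oddPrime n ∣ x.den) := by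
      intro x hx
      obtain ⟨k, hk, rfl⟩ := hl x hx
      have hkn : k ≠ n := by
        rintro rfl
        exact hmem hx
      rw [gen_den]
      intro hdvd
      rcases (Nat.Prime.dvd_mul hp).mp hdvd with h | h
      · have h2 : oddPrime n ∣ 2 := hp.dvd_of_dvd_pow h
        have := (Nat.prime_dvd_prime_iff_eq hp Nat.prime_two).mp h2
        exact oddPrime_ne_two hn this
      · have := (Nat.prime_dvd_prime_iff_eq hp (oddPrime_prime k)).mp h
        exact hkn (oddPrime_inj this.symm)
    have := not_dvd_sum_den hp l hnd
    rw [hsum, hg, gen_den] at this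
    exact this (dvd_mul_left _ _)

private lemma gen_isAtom {x : ℚ} (hx : x ∈ gramsGen) : IsAtomIn gramsM x := by
  obtain ⟨n, hn, rfl⟩ := hx
  refine ⟨AddSubmonoid.subset_closure ⟨n, hn, rfl⟩, ?_, ?_⟩
  · intro h
    have := gramsM_nonneg h
    have hpos := gen_pos (⟨n, hn, rfl⟩ : _ ∈ gramsGen)
    linarith
  · intro b hb c hc habc
    obtain ⟨lb, hlb, hlbs⟩ := mem_gramsM_iff.mp hb
    obtain ⟨lc, hlc, hlcs⟩ := mem_gramsM_iff.mp hc
    have hsum : (lb + lc).sum = 1 / (2 ^ (n - 1) * (oddPrime n : ℚ)) := by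
      rw [Multiset.sum_add, hlbs, hlcs, habc]
    have hall : ∀ x ∈ lb + lc, x ∈ gramsGen := by
      intro x hx
      rcases Multiset.mem_add.mp hx with h | h
      · exact hlb x h
      · exact hlc x h
    have hrep := rep_unique hn hall hsum
    have hcard : Multiset.card lb + Multiset.card lc = 1 := by
      have := congrArg Multiset.card hrep
      simpa using this
    rcases Nat.add_eq_one_iff.mp hcard with ⟨h1, -⟩ | ⟨-, h1⟩
    · left
      rw [Multiset.card_eq_zero] at h1
      rw [h1] at hlbs
      simp at hlbs
      rw [← hlbs]
      simpa [gramsM] using AddSubmonoid.zero_mem (AddSubmonoid.closure gramsGen)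
    · right
      rw [Multiset.card_eq_zero] at h1
      rw [h1] at hlcs
      simp at hlcs
      rw [← hlcs]
      simpa [gramsM] using AddSubmonoid.zero_mem (AddSubmonoid.closure gramsGen)

private lemma atoms_eq : {a : ℚ | IsAtomIn gramsM a} = gramsGen := by
  ext a
  simp only [Set.mem_setOf_eq]
  constructor
  · rintro ⟨haM, haInv, hsplit⟩
    obtain ⟨l, hl, hls⟩ := mem_gramsM_iff.mp haM
    have hlne : l ≠ 0 := by
      rintro rfl
      rw [Multiset.sum_zero] at hls
      apply haInv
      rw [← hls, neg_zero]
      exact AddSubmonoid.zero_mem _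
    obtain ⟨x, hx⟩ := Multiset.exists_mem_of_ne_zero hlne
    have hl' : l = x ::ₘ l.erase x := (Multiset.cons_erase hx).symm
    have hrest : (l.erase x).sum ∈ gramsM :=
      mem_gramsM_iff.mpr ⟨_, fun y hy => hl y (Multiset.mem_of_mem_erase hy), rfl⟩
    have hxM : x ∈ gramsM := AddSubmonoid.subset_closure (hl x hx)
    have heq : a = x + (l.erase x).sum := by
      rw [← hls, ← Multiset.sum_cons, Multiset.cons_erase hx]
    rcases hsplit x hxM _ hrest heq with h | h
    · exfalso
      have := gramsM_nonneg h
      have := gen_pos (hl x hx)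
      linarith
    · have h0 : (l.erase x).sum = 0 := gramsM_eq_zero hrest h
      rw [heq, h0, add_zero]
      exact hl x hx
  · exact gen_isAtom

private lemma gramsM_atomic : IsAtomicSet gramsM := by
  intro a haM _
  obtain ⟨l, hl, hls⟩ := mem_gramsM_iff.mp haM
  exact ⟨l, fun x hx => gen_isAtom (hl x hx), hls⟩

private lemma half_pow_mem (n : ℕ) : (1 : ℚ) / 2 ^ n ∈ gramsM := by
  have hg : (1 : ℚ) / (2 ^ n * (oddPrime (n + 1) : ℚ)) ∈ gramsGen := ⟨n + 1, Nat.le_add_left 1 n, by norm_num⟩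
  have hg' : (1 : ℚ) / (2 ^ n * (oddPrime (n + 1) : ℚ)) ∈ AddSubmonoid.closure gramsGen :=
    AddSubmonoid.subset_closure hg
  have hmem := nsmul_mem hg' (oddPrime (n + 1))
  have hp : ((oddPrime (n + 1) : ℚ)) ≠ 0 := by
    exact_mod_cast (oddPrime_pos (n + 1)).ne'
  have : (oddPrime (n + 1)) • ((1 : ℚ) / (2 ^ n * (oddPrime (n + 1) : ℚ))) = 1 / 2 ^ n := by
    rw [nsmul_eq_mul]
    field_simp
  rwa [this] at hmem


private lemma ideal_ssubset (n : ℕ) :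
    setIdeal gramsM ((1 : ℚ) / 2 ^ n) ⊂ setIdeal gramsM ((1 : ℚ) / 2 ^ (n + 1)) := by
  constructor
  · rintro x ⟨m, hm, rfl⟩
    refine ⟨(1 : ℚ) / 2 ^ (n + 1) + m, ?_, ?_⟩
    · exact AddSubmonoid.add_mem _ (half_pow_mem (n + 1)) hm
    · rw [← add_assoc]
      congr 1
      rw [pow_succ]
      ring
  · intro hsub
    obtain ⟨m, hm, heq⟩ := hsub ⟨0, AddSubmonoid.zero_mem _, (add_zero _).symm⟩
    have hm0 : (0 : ℚ) ≤ m := gramsM_nonneg hm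
    have h2 : (0 : ℚ) < 2 ^ n := by positivity
    have h2' : (0 : ℚ) < 2 ^ (n + 1) := by positivity
    have : (1 : ℚ) / 2 ^ (n + 1) < 1 / 2 ^ n := by
      apply div_lt_div_of_pos_left one_pos h2
      rw [pow_succ]
      nlinarith
    nlinarith [heq]

/-- Grams' monoid is atomic, its atoms are exactly the generators
`1/(2^(n-1) p_n)`, and it does not satisfy the ACCP: `(1/2^n + M)` is an ascending chain
of principal ideals that does not stabilize. -/
theorem grams_monoid_atomic_not_ACCP :
    IsAtomicSet gramsM ∧
    {a : ℚ | IsAtomIn gramsM a} = gramsGen ∧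
    (∀ n : ℕ, 1 ≤ n → (1 : ℚ) / 2 ^ n ∈ gramsM ∧
      setIdeal gramsM ((1 : ℚ) / 2 ^ n) ⊂ setIdeal gramsM ((1 : ℚ) / 2 ^ (n + 1))) ∧
    ¬ SatisfiesACCPSet gramsM := by
  refine ⟨gramsM_atomic, atoms_eq, fun n _ => ⟨half_pow_mem n, ideal_ssubset n⟩, ?_⟩
  intro hACCP
  obtain ⟨N, hN⟩ := hACCP (fun n => (1 : ℚ) / 2 ^ (n + 1))
    (fun n => half_pow_mem (n + 1)) (fun n => (ideal_ssubset (n + 1)).subset)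
  have h1 := hN (N + 1) (Nat.le_succ N)
  exact (ideal_ssubset (N + 1)).ne h1.symm
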